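/- Let X ⊂ R^D with X' ⊂ X as in the noisy input space construction (X the ε_I-neighborhood of a compact set X' with reach τ > ε_I > 0). Let v be a unit vector and let x* ∈ X achieve the minimum of ⟨v, x⟩ over X. Then x* ∈ ∂X, and ζ(x*) − x* = c·v for some c > 0, where ζ(x*) is the unique nearest point of x* in X'. -/

import Mathlib

open Metric

/-- The medial axis of a set `A`: points with at least two distinct nearest points in `A`. -/
def medialAxis {E : Type*} [NormedAddCommGroup E] (A : Set E) : Set E :=
  {z | ∃ p ∈ A, ∃ q ∈ A, p ≠ q ∧ dist p z = infDist z A ∧ dist q z = infDist z A}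

/-- The reach of a set `A`: the infimum over `a ∈ A` of the distance to the medial axis. -/
noncomputable def reach {E : Type*} [NormedAddCommGroup E] (A : Set E) : ℝ :=
  sInf ((fun a => infDist a (medialAxis A)) '' A)

theorem linear_minimizer_on_boundary {D : ℕ} (X' X : Set (EuclideanSpace ℝ (Fin D)))
    (hne : X'.Nonempty) (hcomp : IsCompact X')
    (τ εI : ℝ) (hτ : reach X' = τ) (hεpos : 0 < εI) (hετ : εI < τ)
    (hX : X = {x | infDist x X' ≤ εI})
    (ζ : EuclideanSpace ℝ (Fin D) → EuclideanSpace ℝ (Fin D))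
    (hζmem : ∀ x ∈ X, ζ x ∈ X')
    (hζdist : ∀ x ∈ X, dist x (ζ x) = infDist x X')
    (hζuniq : ∀ x ∈ X, ∀ y ∈ X', dist x y = infDist x X' → y = ζ x)
    (v : EuclideanSpace ℝ (Fin D)) (hv : ‖v‖ = 1)
    (xstar : EuclideanSpace ℝ (Fin D)) (hxstar : xstar ∈ X)
    (hmin : ∀ x ∈ X, (inner ℝ v xstar : ℝ) ≤ (inner ℝ v x : ℝ)) :
    xstar ∈ frontier X ∧ ∃ c : ℝ, 0 < c ∧ ζ xstar - xstar = c • v := by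
  have hvne : v ≠ 0 := by
    intro h; rw [h, norm_zero] at hv; norm_num at hv
  have hclosed : IsClosed X := by
    rw [hX]
    exact isClosed_le (continuous_infDist_pt X') continuous_const
  -- xstar is not in the interior of X
  have hnotint : xstar ∉ interior X := by
    intro h
    obtain ⟨r, hr, hball⟩ := Metric.mem_nhds_iff.mp (mem_interior_iff_mem_nhds.mp h)
    have hy : xstar - (r / 2) • v ∈ X := by
      apply hball
      simp only [mem_ball, dist_sub_eq_dist_add_left]
      rw [dist_eq_norm]
      simp [norm_smul, abs_of_pos hr, hv]
      linarith
    have := hmin _ hy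
    rw [inner_sub_right, real_inner_smul_right, real_inner_self_eq_norm_mul_norm, hv] at this
    nlinarith
  -- the interior contains points with infDist < εI
  have hint : ∀ y : EuclideanSpace ℝ (Fin D), infDist y X' < εI → y ∈ interior X := by
    intro y hy
    rw [mem_interior]
    refine ⟨ball y (εI - infDist y X'), ?_, isOpen_ball, mem_ball_self (by linarith)⟩
    intro z hz
    have h1 : infDist z X' ≤ infDist y X' + dist z y := infDist_le_infDist_add_dist
    have hz' : dist z y < εI - infDist y X' := hz
    rw [hX]
    have : infDist z X' < εI := by linarith
    exact this.le
  have hdle : infDist xstar X' ≤ εI := by rw [hX] at hxstar; exact hxstar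
  have hdeq : infDist xstar X' = εI := by
    rcases lt_or_eq_of_le hdle with h | h
    · exact absurd (hint _ h) hnotint
    · exact h
  have hfront : xstar ∈ frontier X := by
    rw [frontier, hclosed.closure_eq]
    exact ⟨hxstar, hnotint⟩
  refine ⟨hfront, εI, hεpos, ?_⟩
  set p := ζ xstar with hp
  have hpX' : p ∈ X' := hζmem _ hxstar
  have hdp : dist xstar p = εI := by rw [hζdist _ hxstar, hdeq]
  -- candidate point p - εI • v is in X
  have hq : p - εI • v ∈ X := by
    rw [hX]
    calc infDist (p - εI • v) X' ≤ dist (p - εI • v) p := infDist_le_dist_of_mem hpX'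
    _ = εI := by
        rw [dist_eq_norm]
        simp [norm_smul, abs_of_pos hεpos, hv]
  have hle := hmin _ hq
  rw [inner_sub_right, real_inner_smul_right, real_inner_self_eq_norm_mul_norm, hv] at hle
  -- Cauchy-Schwarz
  have hcs : (inner ℝ v (p - xstar) : ℝ) ≤ ‖v‖ * ‖p - xstar‖ := real_inner_le_norm v _
  have hnorm : ‖p - xstar‖ = εI := by rw [← hdp, dist_eq_norm, norm_sub_rev]
  have h3 : (inner ℝ v p : ℝ) - inner ℝ v xstar ≤ εI := by
    rw [inner_sub_right, hv, hnorm, one_mul] at hcs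
    linarith
  have heq : (inner ℝ v (p - xstar) : ℝ) = ‖v‖ * ‖p - xstar‖ := by
    rw [inner_sub_right, hv, hnorm, one_mul]
    linarith
  have hfin := inner_eq_norm_mul_iff_real.mp heq
  rw [hv, hnorm, one_smul] at hfin
  exact hfin.symm
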